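/- Let 𝓕 be a class of functions taking values in [0,1] that contains the zero function, and let S be a sample of n points. Then for any p with 2 ≤ p ≤ ∞, the empirical Rademacher complexity of the restriction 𝓕|_S satisfies rad_S(𝓕) ≤ inf_{α > 0} ( 4α + (12/√n) ∫_α^1 √( log N(𝓕|_S, ε, ‖·‖_p) ) dε ), where N(𝓕|_S, ε, ‖·‖_p) is the covering number of the set {(f(x₁), …, f(x_n)) : f ∈ 𝓕} ⊆ ℝ^n at scale ε with respect to the normalized p-norm ‖v‖_p = ( (1/n) ∑_{i=1}^n |v_i|^p )^{1/p} (with ‖v‖_∞ = max_i |v_i| when p = ∞). -/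

import Mathlib

open MeasureTheory
open scoped ENNReal

/-- Empirical Rademacher complexity of a class `F` of real-valued functions on a sample
`S = (x₁, …, x_n)`. -/
noncomputable def empiricalRademacher {Z : Type*} (F : Set (Z → ℝ)) {n : ℕ}
    (S : Fin n → Z) : ℝ :=
  (1 / 2 ^ n : ℝ) * ∑ σ : Fin n → Bool,
    sSup ((fun f : Z → ℝ =>
      (1 / n : ℝ) * ∑ i, (if σ i then (1 : ℝ) else -1) * f (S i)) '' F)

/-- The normalized `p`-norm on `ℝ^n`: `((1/n) ∑ᵢ |vᵢ|^p)^(1/p)` for finite `p`, and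
`max_i |vᵢ|` for `p = ∞`. -/
noncomputable def normalizedPNorm (n : ℕ) (p : ℝ≥0∞) (v : Fin n → ℝ) : ℝ :=
  if p = ⊤ then ⨆ i, |v i|
  else ((1 / n : ℝ) * ∑ i, |v i| ^ p.toReal) ^ (1 / p.toReal)

/-- Covering number of a subset `A ⊆ ℝ^n` at scale `ε` with respect to the norm-like
function `nrm`: the minimal cardinality of a finite set `C` such that every point of `A` is
within distance `ε` of some element of `C`. -/
noncomputable def coveringNumber (n : ℕ) (A : Set (Fin n → ℝ)) (ε : ℝ)
    (nrm : (Fin n → ℝ) → ℝ) : ℕ :=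
  sInf {m : ℕ | ∃ C : Finset (Fin n → ℝ), C.card = m ∧
    ∀ a ∈ A, ∃ c ∈ C, nrm (fun i => a i - c i) ≤ ε}


open Finset

set_option maxHeartbeats 1000000

private lemma sum_exp_sign (n : ℕ) (lam : ℝ) (g : Fin n → ℝ) :
    ∑ σ : Fin n → Bool, Real.exp (lam * ∑ i, (if σ i then (1:ℝ) else -1) * g i)
      = 2 ^ n * ∏ i, Real.cosh (lam * g i) := by
  have h1 : ∀ σ : Fin n → Bool, Real.exp (lam * ∑ i, (if σ i then (1:ℝ) else -1) * g i)
      = ∏ i, Real.exp (lam * ((if σ i then (1:ℝ) else -1) * g i)) := by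
    intro σ
    rw [← Real.exp_sum, Finset.mul_sum]
  simp only [h1]
  have h2 : ∑ σ : Fin n → Bool, ∏ i, Real.exp (lam * ((if σ i then (1:ℝ) else -1) * g i))
      = ∏ i, ∑ b : Bool, Real.exp (lam * ((if b then (1:ℝ) else -1) * g i)) := by
    classical
    rw [Finset.prod_univ_sum (fun _ => (Finset.univ : Finset Bool))
      (fun i b => Real.exp (lam * ((if b then (1:ℝ) else -1) * g i)))]
    rw [Fintype.piFinset_univ]
  rw [h2]
  have h3 : ∀ i : Fin n, ∑ b : Bool, Real.exp (lam * ((if b then (1:ℝ) else -1) * g i))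
      = 2 * Real.cosh (lam * g i) := by
    intro i
    rw [Fintype.sum_bool]
    norm_num [Real.cosh_eq]
    ring
  simp only [h3]
  rw [Finset.prod_mul_distrib, Finset.prod_const]
  simp [Finset.card_univ]

private lemma massart_aux {n : ℕ} (G : Finset (Fin n → ℝ)) (hG : G.Nonempty) (R : ℝ)
    (hR : 0 ≤ R) (f : (Fin n → Bool) → (Fin n → ℝ) → ℝ)
    (hf : f = fun σ g => ∑ i, (if σ i then (1:ℝ) else -1) * g i)
    (hnorm : ∀ g ∈ G, ∑ i, g i ^ 2 ≤ R ^ 2) :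
    (1 / 2 ^ n : ℝ) * ∑ σ : Fin n → Bool, G.sup' hG (f σ)
      ≤ R * Real.sqrt (2 * Real.log G.card) := by
  set E := (1 / 2 ^ n : ℝ) * ∑ σ : Fin n → Bool, G.sup' hG (f σ) with hE
  have hcard1 : (1:ℝ) ≤ G.card := by exact_mod_cast hG.card_pos
  have hL : 0 ≤ Real.log G.card := Real.log_nonneg hcard1
  set L := Real.log G.card with hLdef
  have key : ∀ lam : ℝ, 0 < lam → E ≤ L / lam + lam * R ^ 2 / 2 := by
    intro lam hlam
    have hw : ∑ _σ : Fin n → Bool, (1 / 2 ^ n : ℝ) = 1 := by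
      rw [Finset.sum_const, Finset.card_univ]
      simp [Fintype.card_fun]
    have jensen : Real.exp (lam * E) ≤ ∑ σ : Fin n → Bool, (1 / 2 ^ n : ℝ) *
        Real.exp (lam * G.sup' hG (f σ)) := by
      have h := convexOn_exp.map_sum_le (t := (Finset.univ : Finset (Fin n → Bool)))
        (w := fun _ => (1 / 2 ^ n : ℝ))
        (p := fun σ => lam * G.sup' hG (f σ))
        (fun _ _ => by positivity) hw (fun _ _ => Set.mem_univ _)
      simp only [smul_eq_mul] at h
      have heq : lam * E = ∑ σ : Fin n → Bool, (1 / 2 ^ n : ℝ) * (lam * G.sup' hG (f σ)) := by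
        rw [hE, Finset.mul_sum, Finset.mul_sum]
        exact Finset.sum_congr rfl fun σ _ => by ring
      rw [heq]
      exact h
    have step2 : ∀ σ : Fin n → Bool,
        Real.exp (lam * G.sup' hG (f σ)) ≤ ∑ g ∈ G, Real.exp (lam * f σ g) := by
      intro σ
      obtain ⟨g₀, hg₀, hgeq⟩ := Finset.exists_mem_eq_sup' hG (f σ)
      rw [hgeq]
      exact Finset.single_le_sum (f := fun g => Real.exp (lam * f σ g))
        (fun g _ => (Real.exp_pos _).le) hg₀
    have step3 : ∀ g ∈ G, (1 / 2 ^ n : ℝ) *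
        ∑ σ : Fin n → Bool, Real.exp (lam * f σ g) ≤ Real.exp (lam ^ 2 * R ^ 2 / 2) := by
      intro g hg
      have hsig : ∑ σ : Fin n → Bool, Real.exp (lam * f σ g)
          = 2 ^ n * ∏ i, Real.cosh (lam * g i) := by
        simp only [hf]
        exact sum_exp_sign n lam g
      rw [hsig]
      have h2n : (1 / 2 ^ n : ℝ) * (2 ^ n * ∏ i, Real.cosh (lam * g i))
          = ∏ i, Real.cosh (lam * g i) := by
        field_simp
      rw [h2n]
      calc ∏ i, Real.cosh (lam * g i) ≤ ∏ i, Real.exp ((lam * g i) ^ 2 / 2) :=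
            Finset.prod_le_prod (fun i _ => (Real.cosh_pos _).le)
              (fun i _ => Real.cosh_le_exp_half_sq _)
        _ = Real.exp (∑ i, (lam * g i) ^ 2 / 2) := (Real.exp_sum _ _).symm
        _ ≤ Real.exp (lam ^ 2 * R ^ 2 / 2) := by
            apply Real.exp_le_exp.2
            have h4 : ∑ i, (lam * g i) ^ 2 / 2 = lam ^ 2 * (∑ i, g i ^ 2) / 2 := by
              rw [Finset.mul_sum, Finset.sum_div]
              exact Finset.sum_congr rfl fun i _ => by ring
            rw [h4]
            have hg2 := hnorm g hg
            nlinarith [sq_nonneg lam]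
    have mgf : Real.exp (lam * E) ≤ G.card * Real.exp (lam ^ 2 * R ^ 2 / 2) := by
      calc Real.exp (lam * E)
          ≤ ∑ σ : Fin n → Bool, (1 / 2 ^ n : ℝ) * Real.exp (lam * G.sup' hG (f σ)) := jensen
        _ ≤ ∑ σ : Fin n → Bool, (1 / 2 ^ n : ℝ) * ∑ g ∈ G, Real.exp (lam * f σ g) := by
            apply Finset.sum_le_sum
            intro σ _
            exact mul_le_mul_of_nonneg_left (step2 σ) (by positivity)
        _ = ∑ g ∈ G, (1 / 2 ^ n : ℝ) * ∑ σ : Fin n → Bool, Real.exp (lam * f σ g) := by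
            simp_rw [Finset.mul_sum]
            rw [Finset.sum_comm]
        _ ≤ ∑ _g ∈ G, Real.exp (lam ^ 2 * R ^ 2 / 2) := Finset.sum_le_sum step3
        _ = G.card * Real.exp (lam ^ 2 * R ^ 2 / 2) := by
            rw [Finset.sum_const, nsmul_eq_mul]
    have hlog : lam * E ≤ L + lam ^ 2 * R ^ 2 / 2 := by
      have h1 : lam * E = Real.log (Real.exp (lam * E)) := (Real.log_exp _).symm
      rw [h1]
      calc Real.log (Real.exp (lam * E)) ≤ Real.log (G.card * Real.exp (lam ^ 2 * R ^ 2 / 2)) :=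
            Real.log_le_log (Real.exp_pos _) mgf
        _ = L + lam ^ 2 * R ^ 2 / 2 := by
            rw [Real.log_mul (by positivity) (Real.exp_ne_zero _), Real.log_exp]
    calc E = (lam * E) / lam := by field_simp
      _ ≤ (L + lam ^ 2 * R ^ 2 / 2) / lam := by gcongr
      _ = L / lam + lam * R ^ 2 / 2 := by field_simp
  rcases eq_or_lt_of_le hR with hR0 | hRpos
  · have hzero : ∀ σ : Fin n → Bool, G.sup' hG (f σ) = 0 := by
      intro σ
      have hz : ∀ g ∈ G, f σ g = 0 := by
        intro g hg
        have h1 : ∑ i, g i ^ 2 ≤ 0 := by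
          have := hnorm g hg
          rw [← hR0] at this
          simpa using this
        have h3 : ∀ j ∈ Finset.univ, (0:ℝ) ≤ g j ^ 2 := fun j _ => sq_nonneg _
        have h4 : ∑ i, g i ^ 2 = 0 := le_antisymm h1 (Finset.sum_nonneg h3)
        have h2 : ∀ i : Fin n, g i = 0 := by
          intro i
          have := (Finset.sum_eq_zero_iff_of_nonneg h3).1 h4 i (Finset.mem_univ i)
          exact pow_eq_zero_iff (n := 2) (by norm_num) |>.1 this
        rw [hf]
        apply Finset.sum_eq_zero
        intro i _
        rw [h2 i, mul_zero]
      rw [Finset.sup'_congr hG rfl hz]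
      exact Finset.sup'_const hG _
    have hEz : E = 0 := by
      rw [hE]
      rw [Finset.sum_congr rfl (fun σ _ => hzero σ)]
      simp
    rw [hEz]
    positivity
  · rcases eq_or_lt_of_le hL with hL0 | hLpos
    · have hE0 : E ≤ 0 := by
        apply le_of_forall_pos_le_add
        intro ε hε
        have h := key (2 * ε / R ^ 2) (by positivity)
        rw [← hL0] at h
        calc E ≤ 0 / (2 * ε / R ^ 2) + (2 * ε / R ^ 2) * R ^ 2 / 2 := h
          _ = 0 + ε := by field_simp; ring
      have : R * Real.sqrt (2 * L) = 0 := by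
        rw [← hL0]
        simp
      rw [this]
      exact hE0
    · have hupos : 0 < Real.sqrt (2 * L) := Real.sqrt_pos.2 (by linarith)
      have hu2 : Real.sqrt (2 * L) ^ 2 = 2 * L := Real.sq_sqrt (by linarith)
      set u := Real.sqrt (2 * L) with hu
      have hlampos : 0 < u / R := div_pos hupos hRpos
      have hk := key (u / R) hlampos
      have heq : L / (u / R) + (u / R) * R ^ 2 / 2 = R * u := by
        field_simp
        nlinarith [hu2]
      linarith [heq ▸ hk]

private lemma massart {n : ℕ} (G : Finset (Fin n → ℝ)) (hG : G.Nonempty) (R : ℝ) (hR : 0 ≤ R)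
    (hnorm : ∀ g ∈ G, ∑ i, g i ^ 2 ≤ R ^ 2) :
    (1 / 2 ^ n : ℝ) * ∑ σ : Fin n → Bool,
      G.sup' hG (fun g => ∑ i, (if σ i then (1:ℝ) else -1) * g i)
      ≤ R * Real.sqrt (2 * Real.log G.card) := by
  exact massart_aux G hG R hR _ rfl hnorm

section norms
variable {n : ℕ} {p : ℝ≥0∞}

private lemma toReal_ge_two (hp : 2 ≤ p) (hptop : p ≠ ⊤) : (2:ℝ) ≤ p.toReal := by
  have := (ENNReal.toReal_le_toReal (by norm_num) hptop).2 hp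
  simpa using this

/-- bound the normalized p-norm by a uniform bound on coordinates -/
private lemma pnorm_le_of_forall (hn : 0 < n) (hp : 2 ≤ p) {v : Fin n → ℝ} {M : ℝ}
    (hM : 0 ≤ M) (h : ∀ i, |v i| ≤ M) : normalizedPNorm n p v ≤ M := by
  haveI : Nonempty (Fin n) := ⟨⟨0, hn⟩⟩
  unfold normalizedPNorm
  split_ifs with htop
  · exact ciSup_le (fun i => h i)
  · have hq : (2:ℝ) ≤ p.toReal := toReal_ge_two hp htop
    have hq0 : 0 < p.toReal := by linarith
    have hsum : ∑ i, |v i| ^ p.toReal ≤ (n : ℝ) * M ^ p.toReal := by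
      calc ∑ i, |v i| ^ p.toReal ≤ ∑ _i : Fin n, M ^ p.toReal :=
            Finset.sum_le_sum fun i _ =>
              Real.rpow_le_rpow (abs_nonneg _) (h i) hq0.le
        _ = (n : ℝ) * M ^ p.toReal := by
            rw [Finset.sum_const, Finset.card_univ, Fintype.card_fin, nsmul_eq_mul]
    have hnpos : (0:ℝ) < n := by exact_mod_cast hn
    have h1 : (1 / n : ℝ) * ∑ i, |v i| ^ p.toReal ≤ M ^ p.toReal := by
      rw [div_mul_eq_mul_div, one_mul, div_le_iff₀ hnpos]
      calc ∑ i, |v i| ^ p.toReal ≤ (n:ℝ) * M ^ p.toReal := hsum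
        _ = M ^ p.toReal * n := by ring
    calc ((1 / n : ℝ) * ∑ i, |v i| ^ p.toReal) ^ (1 / p.toReal)
        ≤ (M ^ p.toReal) ^ (1 / p.toReal) := by
          apply Real.rpow_le_rpow _ h1 (by positivity)
          positivity
      _ = M := by
          rw [← Real.rpow_mul hM, mul_one_div, div_self hq0.ne', Real.rpow_one]

/-- normalized 1-norm is at most the normalized p-norm -/
private lemma one_norm_le_pnorm (hn : 0 < n) (hp : 2 ≤ p) (v : Fin n → ℝ) :
    (1 / n : ℝ) * ∑ i, |v i| ≤ normalizedPNorm n p v := by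
  have hnpos : (0:ℝ) < n := by exact_mod_cast hn
  unfold normalizedPNorm
  split_ifs with htop
  · have hstep : (1 / n : ℝ) * ∑ i, |v i| ≤ (1 / n : ℝ) * ∑ _i : Fin n, ⨆ j, |v j| := by
      apply mul_le_mul_of_nonneg_left _ (by positivity)
      exact Finset.sum_le_sum fun i _ =>
        le_ciSup (f := fun j => |v j|) (Set.Finite.bddAbove (Set.finite_range _)) i
    have heq2 : (1 / n : ℝ) * ∑ _i : Fin n, ⨆ j, |v j| = ⨆ j, |v j| := by
      rw [Finset.sum_const, Finset.card_univ, Fintype.card_fin, nsmul_eq_mul]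
      field_simp
    linarith
  · have hq : (2:ℝ) ≤ p.toReal := toReal_ge_two hp htop
    have h := Real.arith_mean_le_rpow_mean Finset.univ (fun _ => (1/n : ℝ))
      (fun i => |v i|) (fun _ _ => by positivity)
      (by rw [Finset.sum_const, Finset.card_univ, Fintype.card_fin, nsmul_eq_mul]; field_simp)
      (fun i _ => abs_nonneg _) (by linarith : (1:ℝ) ≤ p.toReal)
    calc (1 / n : ℝ) * ∑ i, |v i| = ∑ i, (1/n : ℝ) * |v i| := Finset.mul_sum _ _ _
      _ ≤ (∑ i, (1/n : ℝ) * |v i| ^ p.toReal) ^ (1 / p.toReal) := h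
      _ = ((1 / n : ℝ) * ∑ i, |v i| ^ p.toReal) ^ (1 / p.toReal) := by
          rw [← Finset.mul_sum]

/-- normalized square-sum is at most the square of the normalized p-norm -/
private lemma sq_sum_le_pnorm_sq (hn : 0 < n) (hp : 2 ≤ p) (v : Fin n → ℝ) :
    (1 / n : ℝ) * ∑ i, (v i) ^ 2 ≤ (normalizedPNorm n p v) ^ 2 := by
  have hnpos : (0:ℝ) < n := by exact_mod_cast hn
  unfold normalizedPNorm
  split_ifs with htop
  · have hM : 0 ≤ ⨆ j, |v j| := by
      haveI : Nonempty (Fin n) := ⟨⟨0, hn⟩⟩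
      exact le_ciSup_of_le (Set.Finite.bddAbove (Set.finite_range _))
        (Classical.arbitrary (Fin n)) (abs_nonneg _)
    have h1 : ∀ i, (v i)^2 ≤ (⨆ j, |v j|)^2 := by
      intro i
      have : |v i| ≤ ⨆ j, |v j| :=
        le_ciSup (f := fun j => |v j|) (Set.Finite.bddAbove (Set.finite_range _)) i
      nlinarith [abs_nonneg (v i), sq_abs (v i)]
    calc (1 / n : ℝ) * ∑ i, (v i)^2 ≤ (1 / n : ℝ) * ∑ _i : Fin n, (⨆ j, |v j|)^2 := by
          apply mul_le_mul_of_nonneg_left _ (by positivity)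
          exact Finset.sum_le_sum fun i _ => h1 i
      _ = (⨆ j, |v j|)^2 := by
          rw [Finset.sum_const, Finset.card_univ, Fintype.card_fin, nsmul_eq_mul]
          field_simp
  · have hq : (2:ℝ) ≤ p.toReal := toReal_ge_two hp htop
    have hq0 : 0 < p.toReal := by linarith
    have h := Real.arith_mean_le_rpow_mean Finset.univ (fun _ => (1/n : ℝ))
      (fun i => |v i| ^ 2)  (fun _ _ => by positivity)
      (by rw [Finset.sum_const, Finset.card_univ, Fintype.card_fin, nsmul_eq_mul]; field_simp)
      (fun i _ => by positivity) (p := p.toReal / 2) (by linarith)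
    have hpow : ∀ i : Fin n, (|v i| ^ 2 : ℝ) ^ (p.toReal / 2) = |v i| ^ p.toReal := by
      intro i
      rw [← Real.rpow_natCast |v i| 2, ← Real.rpow_mul (abs_nonneg _)]
      congr 1
      push_cast
      ring
    have hsq : ∀ i : Fin n, (v i)^2 = |v i|^2 := fun i => (sq_abs _).symm
    calc (1 / n : ℝ) * ∑ i, (v i) ^ 2 = ∑ i, (1/n : ℝ) * |v i| ^ 2 := by
          rw [Finset.mul_sum]
          exact Finset.sum_congr rfl fun i _ => by rw [hsq]
      _ ≤ (∑ i, (1/n : ℝ) * (|v i| ^ 2) ^ (p.toReal / 2)) ^ (1 / (p.toReal / 2)) := h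
      _ = (((1 / n : ℝ) * ∑ i, |v i| ^ p.toReal) ^ (1 / p.toReal)) ^ 2 := by
          have : ∑ i, (1/n : ℝ) * (|v i| ^ 2) ^ (p.toReal / 2)
              = (1 / n : ℝ) * ∑ i, |v i| ^ p.toReal := by
            rw [← Finset.mul_sum]
            congr 1
            exact Finset.sum_congr rfl fun i _ => by rw [hpow]
          rw [this]
          have hX : (0:ℝ) ≤ (1 / n : ℝ) * ∑ i, |v i| ^ p.toReal := by positivity
          rw [← Real.rpow_natCast (((1 / n : ℝ) * ∑ i, |v i| ^ p.toReal) ^ (1 / p.toReal)) 2,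
            ← Real.rpow_mul hX]
          congr 1
          field_simp
          norm_num

/-- Euclidean triangle inequality for sums of squares -/
private lemma sqrt_sq_sum_triangle {n : ℕ} (x y : Fin n → ℝ) :
    Real.sqrt (∑ i, (x i + y i)^2) ≤ Real.sqrt (∑ i, (x i)^2) + Real.sqrt (∑ i, (y i)^2) := by
  have hcs : ∑ i, x i * y i ≤ Real.sqrt (∑ i, (x i)^2) * Real.sqrt (∑ i, (y i)^2) := by
    have h2 := Finset.sum_mul_sq_le_sq_mul_sq Finset.univ x y
    calc ∑ i, x i * y i ≤ |∑ i, x i * y i| := le_abs_self _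
      _ = Real.sqrt ((∑ i, x i * y i)^2) := (Real.sqrt_sq_eq_abs _).symm
      _ ≤ Real.sqrt ((∑ i, (x i)^2) * ∑ i, (y i)^2) := Real.sqrt_le_sqrt h2
      _ = Real.sqrt (∑ i, (x i)^2) * Real.sqrt (∑ i, (y i)^2) :=
          Real.sqrt_mul (by positivity) _
  have hx : Real.sqrt (∑ i, (x i)^2) ^ 2 = ∑ i, (x i)^2 := Real.sq_sqrt (by positivity)
  have hy : Real.sqrt (∑ i, (y i)^2) ^ 2 = ∑ i, (y i)^2 := Real.sq_sqrt (by positivity)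
  have hexp : ∑ i, (x i + y i)^2
      ≤ (Real.sqrt (∑ i, (x i)^2) + Real.sqrt (∑ i, (y i)^2))^2 := by
    have : ∑ i, (x i + y i)^2 = ∑ i, (x i)^2 + 2 * ∑ i, x i * y i + ∑ i, (y i)^2 := by
      rw [Finset.mul_sum, ← Finset.sum_add_distrib, ← Finset.sum_add_distrib]
      exact Finset.sum_congr rfl fun i _ => by ring
    nlinarith [hcs, hx, hy]
  calc Real.sqrt (∑ i, (x i + y i)^2)
      ≤ Real.sqrt ((Real.sqrt (∑ i, (x i)^2) + Real.sqrt (∑ i, (y i)^2))^2) :=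
        Real.sqrt_le_sqrt hexp
    _ = Real.sqrt (∑ i, (x i)^2) + Real.sqrt (∑ i, (y i)^2) := by
        rw [Real.sqrt_sq (by positivity)]

end norms

section cover

variable {n : ℕ} {p : ℝ≥0∞} {A : Set (Fin n → ℝ)}

private lemma cover_exists (hn : 0 < n) (hp : 2 ≤ p)
    (hA1 : ∀ v ∈ A, ∀ i, v i ∈ Set.Icc (0:ℝ) 1) {ε : ℝ} (hε : 0 < ε) :
    ∃ C : Finset (Fin n → ℝ), ∀ a ∈ A, ∃ c ∈ C,
      normalizedPNorm n p (fun i => a i - c i) ≤ ε := by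
  classical
  set M := ⌈1/ε⌉₊ with hM
  refine ⟨Fintype.piFinset (fun _ : Fin n => (Finset.range (M+1)).image (fun k : ℕ => (k:ℝ)*ε)), ?_⟩
  intro a ha
  refine ⟨fun i => (⌊a i / ε⌋₊ : ℝ) * ε, ?_, ?_⟩
  · rw [Fintype.mem_piFinset]
    intro i
    have hmem : ⌊a i / ε⌋₊ ∈ Finset.range (M+1) := by
      rw [Finset.mem_range]
      have h1 : a i / ε ≤ 1 / ε := by
        gcongr
        exact (hA1 a ha i).2
      have h2 : ⌊a i / ε⌋₊ ≤ ⌊1 / ε⌋₊ := Nat.floor_le_floor h1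
      have h3 : ⌊1 / ε⌋₊ ≤ M := Nat.floor_le_ceil _
      omega
    exact Finset.mem_image_of_mem _ hmem
  · apply pnorm_le_of_forall hn hp hε.le
    intro i
    have h0 : 0 ≤ a i := (hA1 a ha i).1
    have hfl : (⌊a i / ε⌋₊ : ℝ) * ε ≤ a i := by
      rw [← le_div_iff₀ hε]
      exact Nat.floor_le (by positivity)
    have hfu : a i < ((⌊a i / ε⌋₊ : ℝ) + 1) * ε := by
      rw [← div_lt_iff₀ hε]
      exact Nat.lt_floor_add_one _
    rw [abs_le]
    constructor <;> nlinarith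

private lemma covN_spec (hn : 0 < n) (hp : 2 ≤ p)
    (hA1 : ∀ v ∈ A, ∀ i, v i ∈ Set.Icc (0:ℝ) 1) {ε : ℝ} (hε : 0 < ε) :
    ∃ C : Finset (Fin n → ℝ), C.card = coveringNumber n A ε (normalizedPNorm n p) ∧
      ∀ a ∈ A, ∃ c ∈ C, normalizedPNorm n p (fun i => a i - c i) ≤ ε := by
  obtain ⟨C, hC⟩ := cover_exists hn hp hA1 hε
  have hne : {m : ℕ | ∃ C : Finset (Fin n → ℝ), C.card = m ∧
      ∀ a ∈ A, ∃ c ∈ C, normalizedPNorm n p (fun i => a i - c i) ≤ ε}.Nonempty :=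
    ⟨C.card, C, rfl, hC⟩
  exact Nat.sInf_mem hne

private lemma covN_pos (hn : 0 < n) (hp : 2 ≤ p) (hA0 : A.Nonempty)
    (hA1 : ∀ v ∈ A, ∀ i, v i ∈ Set.Icc (0:ℝ) 1) {ε : ℝ} (hε : 0 < ε) :
    1 ≤ coveringNumber n A ε (normalizedPNorm n p) := by
  by_contra h
  push_neg at h
  interval_cases hN : coveringNumber n A ε (normalizedPNorm n p)
  obtain ⟨C, hCcard, hCcov⟩ := covN_spec hn hp hA1 hε
  rw [hN] at hCcard
  obtain ⟨a, ha⟩ := hA0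
  obtain ⟨c, hc, -⟩ := hCcov a ha
  rw [Finset.card_eq_zero.1 hCcard] at hc
  exact absurd hc (Finset.notMem_empty c)

private lemma covN_antitone (hn : 0 < n) (hp : 2 ≤ p)
    (hA1 : ∀ v ∈ A, ∀ i, v i ∈ Set.Icc (0:ℝ) 1) {ε₁ ε₂ : ℝ} (hε₁ : 0 < ε₁) (h12 : ε₁ ≤ ε₂) :
    coveringNumber n A ε₂ (normalizedPNorm n p) ≤ coveringNumber n A ε₁ (normalizedPNorm n p) := by
  obtain ⟨C, hCcard, hCcov⟩ := covN_spec hn hp hA1 hε₁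
  apply Nat.sInf_le
  exact ⟨C, hCcard, fun a ha => by
    obtain ⟨c, hc, hle⟩ := hCcov a ha
    exact ⟨c, hc, hle.trans h12⟩⟩

private lemma covN_one (hn : 0 < n) (hp : 2 ≤ p) (hA0 : A.Nonempty)
    (hA1 : ∀ v ∈ A, ∀ i, v i ∈ Set.Icc (0:ℝ) 1) {ε : ℝ} (hε : 1/2 ≤ ε) :
    coveringNumber n A ε (normalizedPNorm n p) = 1 := by
  have hεpos : 0 < ε := lt_of_lt_of_le (by norm_num) hε
  refine le_antisymm ?_ (covN_pos hn hp hA0 hA1 hεpos)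
  apply Nat.sInf_le
  refine ⟨{fun _ => (1:ℝ)/2}, Finset.card_singleton _, ?_⟩
  intro a ha
  refine ⟨fun _ => (1:ℝ)/2, Finset.mem_singleton_self _, ?_⟩
  have hb : ∀ i, |a i - 1/2| ≤ 1/2 := by
    intro i
    have := hA1 a ha i
    rw [abs_le]
    constructor <;> [linarith [this.1]; linarith [this.2]]
  exact (pnorm_le_of_forall hn hp (by norm_num) hb).trans hε

end cover

section main

set_option maxHeartbeats 2000000

/-- the trivial bound: the empirical Rademacher complexity is at most 1 -/
private lemma rad_le_one {Z : Type*} (F : Set (Z → ℝ)) (n : ℕ) (S : Fin n → Z)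
    (hF0 : (fun _ : Z => (0 : ℝ)) ∈ F)
    (hFrange : ∀ f ∈ F, ∀ z : Z, f z ∈ Set.Icc (0 : ℝ) 1) :
    empiricalRademacher F S ≤ 1 := by
  unfold empiricalRademacher
  have hsup : ∀ σ : Fin n → Bool,
      sSup ((fun f : Z → ℝ =>
        (1 / n : ℝ) * ∑ i, (if σ i then (1 : ℝ) else -1) * f (S i)) '' F) ≤ 1 := by
    intro σ
    apply csSup_le (Set.Nonempty.image _ ⟨_, hF0⟩)
    rintro y ⟨f, hf, rfl⟩
    show (1 / (n:ℝ)) * ∑ i, (if σ i then (1 : ℝ) else -1) * f (S i) ≤ 1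
    have h1 : ∑ i, (if σ i then (1 : ℝ) else -1) * f (S i) ≤ (n : ℝ) := by
      calc ∑ i, (if σ i then (1 : ℝ) else -1) * f (S i) ≤ ∑ _i : Fin n, (1:ℝ) := by
            apply Finset.sum_le_sum
            intro i _
            have h2 := hFrange f hf (S i)
            split_ifs
            · linarith [h2.2]
            · linarith [h2.1]
        _ = (n : ℝ) := by simp
    rcases Nat.eq_zero_or_pos n with h | h
    · subst h
      simp
    · have hnpos : (0:ℝ) < n := by exact_mod_cast h
      rw [div_mul_eq_mul_div, one_mul, div_le_one hnpos]
      exact h1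
  calc (1 / 2 ^ n : ℝ) * ∑ σ : Fin n → Bool,
        sSup ((fun f : Z → ℝ =>
          (1 / n : ℝ) * ∑ i, (if σ i then (1 : ℝ) else -1) * f (S i)) '' F)
      ≤ (1 / 2 ^ n : ℝ) * ∑ _σ : Fin n → Bool, (1:ℝ) := by
        apply mul_le_mul_of_nonneg_left _ (by positivity)
        exact Finset.sum_le_sum fun σ _ => hsup σ
    _ = 1 := by
        rw [Finset.sum_const, Finset.card_univ]
        simp [Fintype.card_fun]

/-- the hard case of Dudley's bound, via chaining -/
private lemma dudley_main {Z : Type*} (F : Set (Z → ℝ)) (n : ℕ) (S : Fin n → Z)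
    (hF0 : (fun _ : Z => (0 : ℝ)) ∈ F)
    (hFrange : ∀ f ∈ F, ∀ z : Z, f z ∈ Set.Icc (0 : ℝ) 1)
    (p : ℝ≥0∞) (hp : 2 ≤ p) (hn : 0 < n) {α : ℝ} (hα : 0 < α) (hα4 : α < 1/4) :
    empiricalRademacher F S ≤
      4 * α + 12 / Real.sqrt n *
        ∫ ε in α..1, Real.sqrt (Real.log
          (coveringNumber n ((fun f : Z → ℝ => fun i : Fin n => f (S i)) '' F) ε
            (normalizedPNorm n p))) := by
  classical
  have hnpos : (0:ℝ) < n := by exact_mod_cast hn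
  have hsn : (0:ℝ) < Real.sqrt n := Real.sqrt_pos.2 hnpos
  have hsn2 : Real.sqrt n * Real.sqrt n = (n:ℝ) := Real.mul_self_sqrt hnpos.le
  set A : Set (Fin n → ℝ) := (fun f : Z → ℝ => fun i : Fin n => f (S i)) '' F with hA
  set Nf : ℝ → ℕ := fun ε => coveringNumber n A ε (normalizedPNorm n p) with hNf
  set fInt : ℝ → ℝ := fun ε => Real.sqrt (Real.log (Nf ε)) with hfInt
  have hA0 : (fun _ : Fin n => (0:ℝ)) ∈ A := ⟨_, hF0, rfl⟩
  have hA1 : ∀ v ∈ A, ∀ i, v i ∈ Set.Icc (0:ℝ) 1 := by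
    rintro v ⟨f, hf, rfl⟩ i
    exact hFrange f hf (S i)
  -- integrand facts
  have hNmono : ∀ x y : ℝ, 0 < x → x ≤ y → Nf y ≤ Nf x :=
    fun x y hx hxy => covN_antitone hn hp hA1 hx hxy
  have hNpos : ∀ x : ℝ, 0 < x → 1 ≤ Nf x := fun x hx => covN_pos hn hp ⟨_, hA0⟩ hA1 hx
  have hfmono : ∀ x y : ℝ, 0 < x → x ≤ y → fInt y ≤ fInt x := by
    intro x y hx hxy
    apply Real.sqrt_le_sqrt
    apply Real.log_le_log
    · exact_mod_cast Nat.lt_of_lt_of_le Nat.zero_lt_one (hNpos y (lt_of_lt_of_le hx hxy))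
    · exact_mod_cast hNmono x y hx hxy
  have hfnonneg : ∀ x : ℝ, 0 ≤ fInt x := fun x => Real.sqrt_nonneg _
  have hIntOn : ∀ a b : ℝ, 0 < a → a ≤ b →
      IntervalIntegrable fInt MeasureTheory.volume a b := by
    intro a b ha hab
    apply AntitoneOn.intervalIntegrable
    rw [Set.uIcc_of_le hab]
    intro x hx y hy hxy
    exact hfmono x y (lt_of_lt_of_le ha hx.1) hxy
  have hlow : ∀ a b : ℝ, 0 < a → a ≤ b → (b - a) * fInt b ≤ ∫ ε in a..b, fInt ε := by
    intro a b ha hab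
    calc (b - a) * fInt b = ∫ _ε in a..b, fInt b := by
          rw [intervalIntegral.integral_const, smul_eq_mul]
      _ ≤ ∫ ε in a..b, fInt ε := by
          apply intervalIntegral.integral_mono_on hab intervalIntegrable_const
            (hIntOn a b ha hab)
          intro x hx
          exact hfmono x b (lt_of_lt_of_le ha hx.1) hx.2
  -- choice of K
  have hKex : ∃ m : ℕ, (1/2:ℝ)^(m+2) < α := by
    obtain ⟨m, hm⟩ := exists_pow_lt_of_lt_one hα (by norm_num : (1/2:ℝ) < 1)
    refine ⟨m, lt_of_le_of_lt ?_ hm⟩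
    apply pow_le_pow_of_le_one (by norm_num) (by norm_num)
    omega
  set K := Nat.find hKex with hKdef
  have hK2 : (1/2:ℝ)^(K+2) < α := Nat.find_spec hKex
  have hK1 : α ≤ (1/2:ℝ)^(K+1) := by
    rcases Nat.eq_zero_or_pos K with h0 | hpos
    · rw [h0]
      norm_num
      linarith
    · have := Nat.find_min hKex (m := K - 1) (by omega)
      push_neg at this
      have heq : K - 1 + 2 = K + 1 := by omega
      rwa [heq] at this
  -- covers
  have hcov : ∀ j : ℕ, ∃ C : Finset (Fin n → ℝ),
      (j = 0 → C = {(fun _ : Fin n => (0:ℝ))}) ∧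
      (∀ a ∈ A, ∃ c ∈ C, normalizedPNorm n p (fun i => a i - c i) ≤ (1/2:ℝ)^j) ∧
      (∀ k : ℕ, j ≤ k → C.card ≤ Nf ((1/2:ℝ)^k)) := by
    intro j
    rcases j with _ | j'
    · refine ⟨{(fun _ : Fin n => (0:ℝ))}, fun _ => rfl, ?_, ?_⟩
      · intro a ha
        refine ⟨fun _ => (0:ℝ), Finset.mem_singleton_self _, ?_⟩
        rw [pow_zero]
        apply pnorm_le_of_forall hn hp zero_le_one
        intro i
        have := hA1 a ha i
        rw [sub_zero, abs_le]
        exact ⟨by linarith [this.1], this.2⟩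
      · intro k _
        rw [Finset.card_singleton]
        exact hNpos _ (by positivity)
    · obtain ⟨C, hCcard, hCcov⟩ := covN_spec hn hp hA1 (by positivity : (0:ℝ) < (1/2:ℝ)^(j'+1))
      refine ⟨C, fun h => by omega, hCcov, ?_⟩
      intro k hk
      rw [hCcard]
      exact hNmono _ _ (by positivity) (pow_le_pow_of_le_one (by norm_num) (by norm_num) hk)
  choose C hC0 hCcov hCcard using hcov
  have hφex : ∀ (j : ℕ) (v : Fin n → ℝ), v ∈ A → ∃ c, c ∈ C j ∧
      normalizedPNorm n p (fun i => v i - c i) ≤ (1/2:ℝ)^j := by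
    intro j v hv
    obtain ⟨c, hc1, hc2⟩ := hCcov j v hv
    exact ⟨c, hc1, hc2⟩
  choose φ hφmem hφnorm using hφex
  -- Euclidean distance bounds for cover points
  have hdist : ∀ (j : ℕ) (v : Fin n → ℝ) (hv : v ∈ A),
      Real.sqrt (∑ i, (v i - φ j v hv i)^2) ≤ (1/2:ℝ)^j * Real.sqrt n := by
    intro j v hv
    have h1 : (1 / n : ℝ) * ∑ i, (v i - φ j v hv i)^2
        ≤ (normalizedPNorm n p (fun i => v i - φ j v hv i))^2 :=
      sq_sum_le_pnorm_sq hn hp _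
    have h2 : (normalizedPNorm n p (fun i => v i - φ j v hv i))^2 ≤ ((1/2:ℝ)^j)^2 := by
      have hnn : 0 ≤ normalizedPNorm n p (fun i => v i - φ j v hv i) := by
        have := (one_norm_le_pnorm hn hp (fun i => v i - φ j v hv i))
        have h3 : (0:ℝ) ≤ (1 / n : ℝ) * ∑ i, |v i - φ j v hv i| := by positivity
        linarith
      have := hφnorm j v hv
      nlinarith
    have h3 : ∑ i, (v i - φ j v hv i)^2 ≤ ((1/2:ℝ)^j)^2 * n := by
      have h4 : (1 / n : ℝ) * ∑ i, (v i - φ j v hv i)^2 ≤ ((1/2:ℝ)^j)^2 := le_trans h1 h2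
      rw [div_mul_eq_mul_div, one_mul, div_le_iff₀ hnpos] at h4
      linarith [h4]
    calc Real.sqrt (∑ i, (v i - φ j v hv i)^2) ≤ Real.sqrt (((1/2:ℝ)^j)^2 * n) :=
          Real.sqrt_le_sqrt h3
      _ = (1/2:ℝ)^j * Real.sqrt n := by
          rw [Real.sqrt_mul (by positivity), Real.sqrt_sq (by positivity)]
  -- the finite difference classes
  set D : ℕ → Finset (Fin n → ℝ) := fun j =>
    ((C (j+1) ×ˢ C j).filter (fun q => ∑ i, (q.1 i - q.2 i)^2
        ≤ (3 * (1/2:ℝ)^(j+1) * Real.sqrt n)^2)).image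
      (fun q => fun i => q.1 i - q.2 i) with hD
  have hlink : ∀ (j : ℕ) (v : Fin n → ℝ) (hv : v ∈ A),
      (fun i => φ (j+1) v hv i - φ j v hv i) ∈ D j := by
    intro j v hv
    apply Finset.mem_image_of_mem (fun q : (Fin n → ℝ) × (Fin n → ℝ) => fun i => q.1 i - q.2 i)
      (a := (φ (j+1) v hv, φ j v hv))
    rw [Finset.mem_filter, Finset.mem_product]
    refine ⟨⟨hφmem _ _ _, hφmem _ _ _⟩, ?_⟩
    have htri : Real.sqrt (∑ i, (φ (j+1) v hv i - φ j v hv i)^2)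
        ≤ 3 * (1/2:ℝ)^(j+1) * Real.sqrt n := by
      have h1 := hdist (j+1) v hv
      have h2 := hdist j v hv
      have h3 : Real.sqrt (∑ i, (φ (j+1) v hv i - φ j v hv i)^2)
          ≤ Real.sqrt (∑ i, (φ (j+1) v hv i - v i)^2) + Real.sqrt (∑ i, (v i - φ j v hv i)^2) := by
        have := sqrt_sq_sum_triangle (fun i => φ (j+1) v hv i - v i) (fun i => v i - φ j v hv i)
        have heq : ∀ i : Fin n, (φ (j+1) v hv i - v i) + (v i - φ j v hv i)
            = φ (j+1) v hv i - φ j v hv i := fun i => by ring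
        rw [Finset.sum_congr rfl (fun i _ => by rw [heq i])] at this
        exact this
      have h4 : ∑ i, (φ (j+1) v hv i - v i)^2 = ∑ i, (v i - φ (j+1) v hv i)^2 := by
        apply Finset.sum_congr rfl
        intro i _
        ring
      rw [h4] at h3
      have hpow : (1/2:ℝ)^j = 2 * (1/2:ℝ)^(j+1) := by
        rw [pow_succ]
        ring
      calc Real.sqrt (∑ i, (φ (j+1) v hv i - φ j v hv i)^2)
          ≤ (1/2:ℝ)^(j+1) * Real.sqrt n + (1/2:ℝ)^j * Real.sqrt n := le_trans h3 (add_le_add h1 h2)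
        _ = 3 * (1/2:ℝ)^(j+1) * Real.sqrt n := by rw [hpow]; ring
    have hsqnn : (0:ℝ) ≤ ∑ i, (φ (j+1) v hv i - φ j v hv i)^2 := by positivity
    have := Real.sq_sqrt hsqnn
    nlinarith [Real.sqrt_nonneg (∑ i, (φ (j+1) v hv i - φ j v hv i)^2)]
  have hDne : ∀ j : ℕ, (D j).Nonempty := fun j => ⟨_, hlink j _ hA0⟩
  -- per-sigma chaining bound
  have hsup : ∀ σ : Fin n → Bool,
      sSup ((fun f : Z → ℝ =>
          (1 / n : ℝ) * ∑ i, (if σ i then (1 : ℝ) else -1) * f (S i)) '' F)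
        ≤ (1/2:ℝ)^K + ∑ j ∈ Finset.range K, (D j).sup' (hDne j)
            (fun d => (1 / n : ℝ) * ∑ i, (if σ i then (1 : ℝ) else -1) * d i) := by
    intro σ
    set s : Fin n → ℝ := fun i => if σ i then (1:ℝ) else -1 with hs
    apply csSup_le (Set.Nonempty.image _ ⟨_, hF0⟩)
    rintro y ⟨f, hf, rfl⟩
    set v : Fin n → ℝ := fun i => f (S i) with hv
    have hvA : v ∈ A := ⟨f, hf, rfl⟩
    have hsplit : ∀ x w : Fin n → ℝ, (1 / n : ℝ) * ∑ i, s i * (x i - w i)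
        = (1 / n : ℝ) * ∑ i, s i * x i - (1 / n : ℝ) * ∑ i, s i * w i := by
      intro x w
      rw [← mul_sub, ← Finset.sum_sub_distrib]
      congr 1
      exact Finset.sum_congr rfl fun i _ => by ring
    have hφ0 : φ 0 v hvA = (fun _ : Fin n => (0:ℝ)) := by
      have h := hφmem 0 v hvA
      rw [hC0 0 rfl, Finset.mem_singleton] at h
      exact h
    have ht0 : (1 / n : ℝ) * ∑ i, s i * φ 0 v hvA i = 0 := by
      rw [hφ0]
      simp
    have htel : ∑ j ∈ Finset.range K, (1 / n : ℝ) * ∑ i, s i * (φ (j+1) v hvA i - φ j v hvA i)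
        = (1 / n : ℝ) * ∑ i, s i * φ K v hvA i := by
      calc ∑ j ∈ Finset.range K, (1 / n : ℝ) * ∑ i, s i * (φ (j+1) v hvA i - φ j v hvA i)
          = ∑ j ∈ Finset.range K, ((1 / n : ℝ) * ∑ i, s i * φ (j+1) v hvA i
              - (1 / n : ℝ) * ∑ i, s i * φ j v hvA i) :=
            Finset.sum_congr rfl fun j _ => hsplit _ _
        _ = (1 / n : ℝ) * ∑ i, s i * φ K v hvA i := by
            rw [Finset.sum_range_sub (fun j => (1 / n : ℝ) * ∑ i, s i * φ j v hvA i) K, ht0,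
              sub_zero]
    have hdec : (1 / n : ℝ) * ∑ i, s i * v i
        = (1 / n : ℝ) * ∑ i, s i * (v i - φ K v hvA i)
          + ∑ j ∈ Finset.range K, (1 / n : ℝ) * ∑ i, s i * (φ (j+1) v hvA i - φ j v hvA i) := by
      rw [htel, hsplit]
      ring
    have habs : ∀ w : Fin n → ℝ, (1 / n : ℝ) * ∑ i, s i * w i
        ≤ (1 / n : ℝ) * ∑ i, |w i| := by
      intro w
      apply mul_le_mul_of_nonneg_left _ (by positivity)
      apply Finset.sum_le_sum
      intro i _
      simp only [hs]
      split_ifs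
      · rw [one_mul]; exact le_abs_self _
      · rw [neg_one_mul]; exact neg_le_abs _
    have h1 : (1 / n : ℝ) * ∑ i, s i * (v i - φ K v hvA i) ≤ (1/2:ℝ)^K :=
      le_trans (habs _) (le_trans (one_norm_le_pnorm hn hp _) (hφnorm K v hvA))
    have h2 : ∀ j ∈ Finset.range K, (1 / n : ℝ) * ∑ i, s i * (φ (j+1) v hvA i - φ j v hvA i)
        ≤ (D j).sup' (hDne j) (fun d => (1 / n : ℝ) * ∑ i, s i * d i) := by
      intro j _
      exact Finset.le_sup' (f := fun d => (1 / n : ℝ) * ∑ i, s i * d i) (hlink j v hvA)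
    calc (1 / n : ℝ) * ∑ i, s i * v i
        = (1 / n : ℝ) * ∑ i, s i * (v i - φ K v hvA i)
          + ∑ j ∈ Finset.range K, (1 / n : ℝ) * ∑ i, s i * (φ (j+1) v hvA i - φ j v hvA i) := hdec
      _ ≤ (1/2:ℝ)^K + ∑ j ∈ Finset.range K, (D j).sup' (hDne j)
            (fun d => (1 / n : ℝ) * ∑ i, s i * d i) :=
          add_le_add h1 (Finset.sum_le_sum h2)
  -- averaging
  have havg : empiricalRademacher F S ≤ (1/2:ℝ)^K + ∑ j ∈ Finset.range K,
      (1 / 2 ^ n : ℝ) * ∑ σ : Fin n → Bool, (D j).sup' (hDne j)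
        (fun d => (1 / n : ℝ) * ∑ i, (if σ i then (1 : ℝ) else -1) * d i) := by
    unfold empiricalRademacher
    calc (1 / 2 ^ n : ℝ) * ∑ σ : Fin n → Bool,
          sSup ((fun f : Z → ℝ =>
            (1 / n : ℝ) * ∑ i, (if σ i then (1 : ℝ) else -1) * f (S i)) '' F)
        ≤ (1 / 2 ^ n : ℝ) * ∑ σ : Fin n → Bool, ((1/2:ℝ)^K + ∑ j ∈ Finset.range K,
            (D j).sup' (hDne j)
              (fun d => (1 / n : ℝ) * ∑ i, (if σ i then (1 : ℝ) else -1) * d i)) := by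
          apply mul_le_mul_of_nonneg_left _ (by positivity)
          exact Finset.sum_le_sum fun σ _ => hsup σ
      _ = (1/2:ℝ)^K + ∑ j ∈ Finset.range K,
            (1 / 2 ^ n : ℝ) * ∑ σ : Fin n → Bool, (D j).sup' (hDne j)
              (fun d => (1 / n : ℝ) * ∑ i, (if σ i then (1 : ℝ) else -1) * d i) := by
          rw [Finset.sum_add_distrib, Finset.sum_const, Finset.card_univ, mul_add]
          congr 1
          · rw [nsmul_eq_mul]
            simp [Fintype.card_fun]
          · calc (1 / 2 ^ n : ℝ) * ∑ σ : Fin n → Bool, ∑ j ∈ Finset.range K,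
                  (D j).sup' (hDne j)
                    (fun d => (1 / n : ℝ) * ∑ i, (if σ i then (1 : ℝ) else -1) * d i)
                = (1 / 2 ^ n : ℝ) * ∑ j ∈ Finset.range K, ∑ σ : Fin n → Bool,
                  (D j).sup' (hDne j)
                    (fun d => (1 / n : ℝ) * ∑ i, (if σ i then (1 : ℝ) else -1) * d i) := by
                  rw [Finset.sum_comm]
              _ = ∑ j ∈ Finset.range K, (1 / 2 ^ n : ℝ) * ∑ σ : Fin n → Bool,
                  (D j).sup' (hDne j)
                    (fun d => (1 / n : ℝ) * ∑ i, (if σ i then (1 : ℝ) else -1) * d i) :=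
                  Finset.mul_sum _ _ _
  -- Massart bound for each level
  have hmassart : ∀ j : ℕ, (1 / 2 ^ n : ℝ) * ∑ σ : Fin n → Bool, (D j).sup' (hDne j)
        (fun d => (1 / n : ℝ) * ∑ i, (if σ i then (1 : ℝ) else -1) * d i)
      ≤ 6 * (1/2:ℝ)^(j+1) * fInt ((1/2:ℝ)^(j+1)) / Real.sqrt n := by
    intro j
    have hpull : ∀ σ : Fin n → Bool, (D j).sup' (hDne j)
          (fun d => (1 / n : ℝ) * ∑ i, (if σ i then (1 : ℝ) else -1) * d i)
        = (1 / n : ℝ) * (D j).sup' (hDne j)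
            (fun d => ∑ i, (if σ i then (1 : ℝ) else -1) * d i) := by
      intro σ
      exact (Finset.comp_sup'_eq_sup'_comp (hDne j)
        (fun x : ℝ => (1 / n : ℝ) * x)
        (fun a b => mul_max_of_nonneg a b (by positivity))).symm
    have hnorm : ∀ d ∈ D j, ∑ i, d i ^ 2 ≤ (3 * (1/2:ℝ)^(j+1) * Real.sqrt n)^2 := by
      intro d hd
      rw [hD] at hd
      simp only [Finset.mem_image, Finset.mem_filter] at hd
      obtain ⟨q, ⟨-, hq2⟩, rfl⟩ := hd
      exact hq2
    have hmass := massart (D j) (hDne j) (3 * (1/2:ℝ)^(j+1) * Real.sqrt n) (by positivity) hnorm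
    have hcard : ((D j).card : ℝ) ≤ (Nf ((1/2:ℝ)^(j+1)) : ℝ)^2 := by
      have hc1 : (D j).card ≤ (C (j+1)).card * (C j).card := by
        rw [hD]
        calc (((C (j+1) ×ˢ C j).filter _).image _).card
            ≤ ((C (j+1) ×ˢ C j).filter _).card := Finset.card_image_le
          _ ≤ (C (j+1) ×ˢ C j).card := Finset.card_filter_le _ _
          _ = (C (j+1)).card * (C j).card := Finset.card_product _ _
      have hc2 : (C (j+1)).card ≤ Nf ((1/2:ℝ)^(j+1)) := hCcard (j+1) (j+1) le_rfl
      have hc3 : (C j).card ≤ Nf ((1/2:ℝ)^(j+1)) := hCcard j (j+1) (Nat.le_succ j)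
      have : (D j).card ≤ Nf ((1/2:ℝ)^(j+1)) * Nf ((1/2:ℝ)^(j+1)) :=
        le_trans hc1 (Nat.mul_le_mul hc2 hc3)
      calc ((D j).card : ℝ) ≤ (Nf ((1/2:ℝ)^(j+1)) * Nf ((1/2:ℝ)^(j+1)) : ℕ) := by exact_mod_cast this
        _ = (Nf ((1/2:ℝ)^(j+1)) : ℝ)^2 := by push_cast; ring
    have hlog : Real.log ((D j).card) ≤ 2 * Real.log (Nf ((1/2:ℝ)^(j+1))) := by
      have hd1 : (0:ℝ) < (D j).card := by exact_mod_cast (hDne j).card_pos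
      calc Real.log ((D j).card) ≤ Real.log ((Nf ((1/2:ℝ)^(j+1)) : ℝ)^2) :=
            Real.log_le_log hd1 hcard
        _ = 2 * Real.log (Nf ((1/2:ℝ)^(j+1))) := by
            rw [Real.log_pow]
            push_cast
            ring
    have hlogN : 0 ≤ Real.log (Nf ((1/2:ℝ)^(j+1))) := by
      apply Real.log_nonneg
      exact_mod_cast hNpos _ (by positivity)
    have hsqrt : Real.sqrt (2 * Real.log ((D j).card))
        ≤ 2 * fInt ((1/2:ℝ)^(j+1)) := by
      calc Real.sqrt (2 * Real.log ((D j).card))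
          ≤ Real.sqrt (4 * Real.log (Nf ((1/2:ℝ)^(j+1)))) := by
            apply Real.sqrt_le_sqrt
            linarith
        _ = 2 * fInt ((1/2:ℝ)^(j+1)) := by
            rw [hfInt]
            rw [show (4:ℝ) = 2^2 by norm_num, Real.sqrt_mul (by positivity),
              Real.sqrt_sq (by norm_num : (0:ℝ) ≤ 2)]
    calc (1 / 2 ^ n : ℝ) * ∑ σ : Fin n → Bool, (D j).sup' (hDne j)
          (fun d => (1 / n : ℝ) * ∑ i, (if σ i then (1 : ℝ) else -1) * d i)
        = (1 / n : ℝ) * ((1 / 2 ^ n : ℝ) * ∑ σ : Fin n → Bool, (D j).sup' (hDne j)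
            (fun d => ∑ i, (if σ i then (1 : ℝ) else -1) * d i)) := by
          rw [Finset.sum_congr rfl fun σ _ => hpull σ, ← Finset.mul_sum]
          ring
      _ ≤ (1 / n : ℝ) * ((3 * (1/2:ℝ)^(j+1) * Real.sqrt n) *
            Real.sqrt (2 * Real.log ((D j).card))) := by
          apply mul_le_mul_of_nonneg_left hmass (by positivity)
      _ ≤ (1 / n : ℝ) * ((3 * (1/2:ℝ)^(j+1) * Real.sqrt n) * (2 * fInt ((1/2:ℝ)^(j+1)))) := by
          apply mul_le_mul_of_nonneg_left _ (by positivity)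
          apply mul_le_mul_of_nonneg_left hsqrt (by positivity)
      _ = 6 * (1/2:ℝ)^(j+1) * fInt ((1/2:ℝ)^(j+1)) / Real.sqrt n := by
          have h5 : (Real.sqrt n) / (n:ℝ) = 1 / Real.sqrt n := by
            rw [div_eq_div_iff hnpos.ne' hsn.ne']
            rw [one_mul]
            exact hsn2
          calc (1 / n : ℝ) * ((3 * (1/2:ℝ)^(j+1) * Real.sqrt n) * (2 * fInt ((1/2:ℝ)^(j+1))))
              = 6 * (1/2:ℝ)^(j+1) * fInt ((1/2:ℝ)^(j+1)) * (Real.sqrt n / n) := by ring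
            _ = 6 * (1/2:ℝ)^(j+1) * fInt ((1/2:ℝ)^(j+1)) / Real.sqrt n := by
                rw [h5]
                ring
  -- integral comparison per level
  have hintj : ∀ j : ℕ, 6 * (1/2:ℝ)^(j+1) * fInt ((1/2:ℝ)^(j+1)) / Real.sqrt n
      ≤ 12 / Real.sqrt n * ∫ ε in (1/2:ℝ)^(j+2)..(1/2:ℝ)^(j+1), fInt ε := by
    intro j
    have hab : (1/2:ℝ)^(j+2) ≤ (1/2:ℝ)^(j+1) :=
      pow_le_pow_of_le_one (by norm_num) (by norm_num) (by omega)
    have hlow2 := hlow ((1/2:ℝ)^(j+2)) ((1/2:ℝ)^(j+1)) (by positivity) hab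
    have hgap : (1/2:ℝ)^(j+1) - (1/2:ℝ)^(j+2) = (1/2:ℝ)^(j+2) := by
      rw [pow_succ ((1/2:ℝ)) (j+1)]
      ring
    rw [hgap] at hlow2
    have h6 : 6 * (1/2:ℝ)^(j+1) * fInt ((1/2:ℝ)^(j+1)) / Real.sqrt n
        = 12 / Real.sqrt n * ((1/2:ℝ)^(j+2) * fInt ((1/2:ℝ)^(j+1))) := by
      rw [pow_succ ((1/2:ℝ)) (j+1)]
      field_simp
      ring
    rw [h6]
    apply mul_le_mul_of_nonneg_left hlow2 (by positivity)
  -- sum the integrals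
  have hsum_int : ∑ j ∈ Finset.range K, ∫ ε in (1/2:ℝ)^(j+2)..(1/2:ℝ)^(j+1), fInt ε
      = ∫ ε in (1/2:ℝ)^(K+1)..(1/2:ℝ), fInt ε := by
    have hintk : ∀ k < K, IntervalIntegrable fInt MeasureTheory.volume
        ((1/2:ℝ)^(K+1-k)) ((1/2:ℝ)^(K+1-(k+1))) := by
      intro k hk
      apply hIntOn _ _ (by positivity)
      apply pow_le_pow_of_le_one (by norm_num) (by norm_num)
      omega
    have hadj := intervalIntegral.sum_integral_adjacent_intervals
      (a := fun k => (1/2:ℝ)^(K+1-k)) (n := K) (f := fInt)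
      (μ := MeasureTheory.volume) hintk
    have hrefl := Finset.sum_range_reflect
      (fun j => ∫ ε in (1/2:ℝ)^(j+2)..(1/2:ℝ)^(j+1), fInt ε) K
    rw [← hrefl]
    have : ∀ k ∈ Finset.range K,
      (∫ ε in (1/2:ℝ)^(K-1-k+2)..(1/2:ℝ)^(K-1-k+1), fInt ε)
        = ∫ ε in (1/2:ℝ)^(K+1-k)..(1/2:ℝ)^(K+1-(k+1)), fInt ε := by
      intro k hk
      rw [Finset.mem_range] at hk
      have e1 : K-1-k+2 = K+1-k := by omega
      have e2 : K-1-k+1 = K+1-(k+1) := by omega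
      rw [e1, e2]
    rw [Finset.sum_congr rfl this, hadj]
    have e3 : K+1-0 = K+1 := by omega
    have e4 : K+1-K = 1 := by omega
    simp only [e3, e4, pow_one]
  -- extend to the full interval
  have hext : ∫ ε in (1/2:ℝ)^(K+1)..(1/2:ℝ), fInt ε ≤ ∫ ε in α..1, fInt ε := by
    have hαK : α ≤ (1/2:ℝ)^(K+1) := hK1
    have hhalf : (1/2:ℝ)^(K+1) ≤ 1/2 := by
      calc (1/2:ℝ)^(K+1) ≤ (1/2:ℝ)^1 :=
        pow_le_pow_of_le_one (by norm_num) (by norm_num) (by omega)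
      _ = 1/2 := pow_one _
    have i1 : IntervalIntegrable fInt MeasureTheory.volume α ((1/2:ℝ)^(K+1)) :=
      hIntOn _ _ hα hαK
    have i2 : IntervalIntegrable fInt MeasureTheory.volume ((1/2:ℝ)^(K+1)) (1/2:ℝ) :=
      hIntOn _ _ (by positivity) hhalf
    have i3 : IntervalIntegrable fInt MeasureTheory.volume (1/2:ℝ) 1 :=
      hIntOn _ _ (by norm_num) (by norm_num)
    have hsplit2 : ∫ ε in α..1, fInt ε = (∫ ε in α..(1/2:ℝ)^(K+1), fInt ε)
        + (∫ ε in (1/2:ℝ)^(K+1)..(1/2:ℝ), fInt ε) + ∫ ε in (1/2:ℝ)..1, fInt ε := by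
      rw [← intervalIntegral.integral_add_adjacent_intervals (i1.trans i2) i3,
        ← intervalIntegral.integral_add_adjacent_intervals i1 i2]
    have hnn1 : 0 ≤ ∫ ε in α..(1/2:ℝ)^(K+1), fInt ε :=
      intervalIntegral.integral_nonneg hαK (fun x _ => hfnonneg x)
    have hnn3 : 0 ≤ ∫ ε in (1/2:ℝ)..1, fInt ε :=
      intervalIntegral.integral_nonneg (by norm_num) (fun x _ => hfnonneg x)
    linarith [hsplit2]
  -- put everything together
  have hKα : (1/2:ℝ)^K < 4 * α := by
    have : (1/2:ℝ)^K = 4 * (1/2:ℝ)^(K+2) := by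
      rw [pow_succ, pow_succ]
      ring
    rw [this]
    linarith
  have hfinal : ∑ j ∈ Finset.range K, (1 / 2 ^ n : ℝ) * ∑ σ : Fin n → Bool, (D j).sup' (hDne j)
        (fun d => (1 / n : ℝ) * ∑ i, (if σ i then (1 : ℝ) else -1) * d i)
      ≤ 12 / Real.sqrt n * ∫ ε in α..1, fInt ε := by
    calc ∑ j ∈ Finset.range K, (1 / 2 ^ n : ℝ) * ∑ σ : Fin n → Bool, (D j).sup' (hDne j)
          (fun d => (1 / n : ℝ) * ∑ i, (if σ i then (1 : ℝ) else -1) * d i)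
        ≤ ∑ j ∈ Finset.range K, 12 / Real.sqrt n *
            ∫ ε in (1/2:ℝ)^(j+2)..(1/2:ℝ)^(j+1), fInt ε :=
          Finset.sum_le_sum fun j _ => le_trans (hmassart j) (hintj j)
      _ = 12 / Real.sqrt n * ∫ ε in (1/2:ℝ)^(K+1)..(1/2:ℝ), fInt ε := by
          rw [← Finset.mul_sum, hsum_int]
      _ ≤ 12 / Real.sqrt n * ∫ ε in α..1, fInt ε := by
          apply mul_le_mul_of_nonneg_left hext (by positivity)
  calc empiricalRademacher F S ≤ (1/2:ℝ)^K + ∑ j ∈ Finset.range K,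
        (1 / 2 ^ n : ℝ) * ∑ σ : Fin n → Bool, (D j).sup' (hDne j)
          (fun d => (1 / n : ℝ) * ∑ i, (if σ i then (1 : ℝ) else -1) * d i) := havg
    _ ≤ 4 * α + 12 / Real.sqrt n * ∫ ε in α..1, fInt ε := by
        apply add_le_add hKα.le hfinal
    _ = 4 * α + 12 / Real.sqrt n *
        ∫ ε in α..1, Real.sqrt (Real.log
          (coveringNumber n ((fun f : Z → ℝ => fun i : Fin n => f (S i)) '' F) ε
            (normalizedPNorm n p))) := rfl

end main
theorem dudley_entropy_integral
    {Z : Type*} (F : Set (Z → ℝ)) (n : ℕ) (S : Fin n → Z)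
    (hF0 : (fun _ : Z => (0 : ℝ)) ∈ F)
    (hFrange : ∀ f ∈ F, ∀ z : Z, f z ∈ Set.Icc (0 : ℝ) 1)
    (p : ℝ≥0∞) (hp : 2 ≤ p) :
    empiricalRademacher F S ≤
      sInf ((fun α : ℝ =>
        4 * α + 12 / Real.sqrt n *
          ∫ ε in α..1, Real.sqrt (Real.log
            (coveringNumber n ((fun f : Z → ℝ => fun i : Fin n => f (S i)) '' F) ε
              (normalizedPNorm n p)))) '' Set.Ioi (0 : ℝ)) := by
  refine le_csInf ⟨_, ⟨1, Set.mem_Ioi.2 one_pos, rfl⟩⟩ ?_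
  rintro b ⟨α, hα, rfl⟩
  rw [Set.mem_Ioi] at hα
  rcases Nat.eq_zero_or_pos n with hn0 | hn
  · subst hn0
    have hrad : empiricalRademacher F S = 0 := by
      unfold empiricalRademacher
      have himg : ∀ σ : Fin 0 → Bool, ((fun f : Z → ℝ =>
          (1 / ((0:ℕ):ℝ)) * ∑ i : Fin 0, (if σ i then (1:ℝ) else -1) * f (S i)) '' F)
            = {(0:ℝ)} := by
        intro σ
        have hfun : (fun f : Z → ℝ =>
            (1 / ((0:ℕ):ℝ)) * ∑ i : Fin 0, (if σ i then (1:ℝ) else -1) * f (S i))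
              = fun _ => (0:ℝ) := by
          funext f
          simp
        rw [hfun]
        exact Set.Nonempty.image_const ⟨_, hF0⟩ _
      rw [Finset.sum_congr rfl fun σ _ => by rw [himg σ, csSup_singleton]]
      simp
    rw [hrad]
    simp only [Nat.cast_zero, Real.sqrt_zero, div_zero, zero_mul, add_zero]
    linarith
  · rcases lt_or_ge α (1/4) with h4 | h4
    · exact dudley_main F n S hF0 hFrange p hp hn hα h4
    · have hrad1 := rad_le_one F n S hF0 hFrange
      rcases le_or_gt α 1 with h1 | h1
      · have hint : 0 ≤ ∫ ε in α..1, Real.sqrt (Real.log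
            (coveringNumber n ((fun f : Z → ℝ => fun i : Fin n => f (S i)) '' F) ε
              (normalizedPNorm n p))) :=
          intervalIntegral.integral_nonneg h1 (fun x _ => Real.sqrt_nonneg _)
        have h12 : 0 ≤ 12 / Real.sqrt n * ∫ ε in α..1, Real.sqrt (Real.log
            (coveringNumber n ((fun f : Z → ℝ => fun i : Fin n => f (S i)) '' F) ε
              (normalizedPNorm n p))) :=
          mul_nonneg (by positivity) hint
        linarith
      · have hA0 : (fun _ : Fin n => (0:ℝ)) ∈ ((fun f : Z → ℝ => fun i : Fin n => f (S i)) '' F) :=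
          ⟨_, hF0, rfl⟩
        have hA1 : ∀ v ∈ ((fun f : Z → ℝ => fun i : Fin n => f (S i)) '' F),
            ∀ i, v i ∈ Set.Icc (0:ℝ) 1 := by
          rintro v ⟨f, hf, rfl⟩ i
          exact hFrange f hf (S i)
        have hzero : ∫ ε in α..1, Real.sqrt (Real.log
            (coveringNumber n ((fun f : Z → ℝ => fun i : Fin n => f (S i)) '' F) ε
              (normalizedPNorm n p))) = 0 := by
          have heqon : Set.EqOn (fun ε => Real.sqrt (Real.log
              ((coveringNumber n ((fun f : Z → ℝ => fun i : Fin n => f (S i)) '' F) ε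
                (normalizedPNorm n p) : ℕ) : ℝ)))
              (fun _ => (0:ℝ)) (Set.uIcc α 1) := by
            intro x hx
            rw [Set.uIcc_of_ge h1.le] at hx
            have hx2 : (1/2:ℝ) ≤ x := by linarith [hx.1]
            have := covN_one hn hp ⟨_, hA0⟩ hA1 hx2
            simp only
            rw [this]
            simp
          have h := intervalIntegral.integral_congr (a := α) (b := 1)
            (μ := MeasureTheory.volume) heqon
          simpa using h
        beta_reduce
        rw [hzero, mul_zero, add_zero]
        linarith
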